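/- Let u_n and v_n be the normalized Maclaurin coefficients of e^{ipz}·J_ν(z) and of e^{−ipz}·J_ν(z) respectively (i denotes the imaginary unit). Then the n-th normalized Maclaurin coefficient of sin(pz)·J_ν(z) equals (u_n − v_n)/(2i) for every n ≥ 0; moreover u_0 = 1, u_1 = ip, v_0 = 1, v_1 = −ip, and for every n ≥ 1: u_{n+1} = (ip(2ν+2n+1)/((n+1)(2ν+n+1)))·u_n + ((p²−1)/((n+1)(2ν+n+1)))·u_{n−1} and v_{n+1} = −(ip(2ν+2n+1)/((n+1)(2ν+n+1)))·v_n + ((p²−1)/((n+1)(2ν+n+1)))·v_{n−1}. -/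

import Mathlib

open Complex Filter FormalMultilinearSeries

lemma ofScalars_coeff_eq (d : ℕ → ℂ) (n : ℕ) : (ofScalars ℂ d).coeff n = d n := by
  have := ofScalars_apply_eq (E := ℂ) (c := d) 1 n
  simp only [FormalMultilinearSeries.coeff]
  simpa using this

lemma iteratedDeriv_eq_of_hasSum (d : ℕ → ℂ) (f : ℂ → ℂ)
    (h : ∀ z : ℂ, HasSum (fun n => d n * z ^ n) (f z)) (n : ℕ) :
    iteratedDeriv n f 0 = (n.factorial : ℂ) * d n := by
  set p := ofScalars ℂ d with hp_def
  have hnorm : ∀ m, ‖p m‖ = ‖d m‖ := fun m => ofScalars_norm ℂ d m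
  have hrad : ∀ r : NNReal, (r : ENNReal) ≤ p.radius := by
    intro r
    refine p.le_radius_of_tendsto (l := 0) ?_
    have hs := (h (r : ℂ)).summable.tendsto_atTop_zero.norm
    simp only [norm_mul, norm_pow, norm_zero] at hs
    convert hs using 2 with m
    rw [hnorm m]
    norm_num
  have hpr : p.radius = ⊤ := ENNReal.eq_top_of_forall_nnreal_le hrad
  have hp : HasFPowerSeriesOnBall f p 0 ⊤ := by
    refine ⟨hpr ▸ le_rfl, ENNReal.zero_lt_top, fun {y} _ => ?_⟩
    have := h y
    simp only [zero_add]
    convert this using 1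
    · rfl
    funext m
    have := ofScalars_apply_eq (E := ℂ) (c := d) y m
    simpa [smul_eq_mul, hp_def, ofScalars_coeff_eq] using this
  have hdiff : Differentiable ℂ f := fun z =>
    (hp.analyticOnNhd z (by simp)).differentiableAt
  set q := ofScalars ℂ (fun m => (m.factorial : ℂ)⁻¹ * iteratedDeriv m f 0) with hq_def
  have htaylor : ∀ z : ℂ, HasSum
      (fun m => ((m.factorial : ℂ)⁻¹ * iteratedDeriv m f 0) * z ^ m) (f z) := by
    intro z
    have := Complex.hasSum_taylorSeries_on_emetric_ball (c := 0) (r := ⊤)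
      hdiff.differentiableOn (z := z) (by simp)
    simpa [smul_eq_mul, mul_comm, mul_assoc, mul_left_comm] using this
  have hqr : (1 : ENNReal) ≤ q.radius := by
    have h2 : Tendsto (fun m => ‖q m‖ * (1 : ℝ) ^ m) atTop (nhds 0) := by
      have hs := (htaylor 1).summable.tendsto_atTop_zero.norm
      simp only [one_pow, mul_one, norm_zero] at hs ⊢
      convert hs using 2 with m
      exact ofScalars_norm ℂ _ m
    have := q.le_radius_of_tendsto (r := 1) (l := 0) (by exact_mod_cast h2)
    simpa using this
  have hq : HasFPowerSeriesAt f q 0 := by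
    refine ⟨1, hqr, one_pos, fun {y} _ => ?_⟩
    have := htaylor y
    simp only [zero_add]
    convert this using 1
    · rfl
    funext m
    have := ofScalars_apply_eq (E := ℂ) (c := fun m => (m.factorial : ℂ)⁻¹ * iteratedDeriv m f 0) y m
    simpa [smul_eq_mul, hq_def, ofScalars_coeff_eq] using this
  have hpq : p = q := hp.hasFPowerSeriesAt.eq_formalMultilinearSeries hq
  have hd : d n = (n.factorial : ℂ)⁻¹ * iteratedDeriv n f 0 :=
    congrFun (ofScalars_series_injective (𝕜 := ℂ) (E := ℂ) hpq) n
  rw [hd, mul_inv_cancel_left₀ (by exact_mod_cast n.factorial_ne_zero)]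

/-- The entire part of the Bessel function of the first kind:
`J_ν(z) = (z/2)^ν * besselSeries ν z`. -/
noncomputable def besselSeries (ν : ℂ) (z : ℂ) : ℂ :=
  ∑' k : ℕ, (-1) ^ k * z ^ (2 * k) / (4 ^ k * (Nat.factorial k : ℂ) * Complex.Gamma (ν + (k : ℂ) + 1))

noncomputable def bA (ν : ℂ) (k : ℕ) : ℂ :=
  (-1) ^ k / (4 ^ k * (Nat.factorial k : ℂ) * Complex.Gamma (ν + (k : ℂ) + 1))

section basic
variable {ν : ℂ} (hν : ∀ n : ℕ, 2 * ν + (n : ℂ) + 1 ≠ 0)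
include hν

lemma nuk_ne (k : ℕ) : ν + (k : ℂ) + 1 ≠ 0 := by
  have := hν (2 * k + 1)
  intro h
  apply this
  push_cast
  linear_combination 2 * h

lemma gamma_ne (k : ℕ) : Complex.Gamma (ν + (k : ℂ) + 1) ≠ 0 := by
  apply Complex.Gamma_ne_zero
  intro m h
  apply hν (2 * (k + m) + 1)
  push_cast
  push_cast at h
  linear_combination 2 * h

lemma bA_ne (k : ℕ) : bA ν k ≠ 0 := by
  unfold bA
  apply div_ne_zero
  · exact pow_ne_zero _ (by norm_num)
  · refine mul_ne_zero (mul_ne_zero (pow_ne_zero _ (by norm_num)) ?_) (gamma_ne hν k)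
    exact_mod_cast (Nat.cast_ne_zero (R := ℂ)).mpr k.factorial_ne_zero

lemma bA_rec (k : ℕ) : bA ν k = -(4 * ((k : ℂ) + 1) * (ν + k + 1)) * bA ν (k + 1) := by
  unfold bA
  have hg : Complex.Gamma (ν + ((k:ℂ) + 1) + 1) = (ν + k + 1) * Complex.Gamma (ν + k + 1) := by
    have h : (ν + ((k : ℂ) + 1) + 1) = (ν + k + 1) + 1 := by ring
    rw [h, Complex.Gamma_add_one _ (nuk_ne hν k)]
  have h1 := gamma_ne hν k
  have h2 := nuk_ne hν k
  have h3 : ((k.factorial : ℂ)) ≠ 0 := by exact_mod_cast k.factorial_ne_zero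
  have h4 : ((4:ℂ)) ^ k ≠ 0 := pow_ne_zero _ (by norm_num)
  push_cast
  have h5 : ((4:ℂ))^(k+1) ≠ 0 := pow_ne_zero _ (by norm_num)
  have h6 : (((k+1).factorial : ℂ)) ≠ 0 := by exact_mod_cast (k+1).factorial_ne_zero
  rw [hg, mul_div_assoc', div_eq_div_iff (mul_ne_zero (mul_ne_zero h4 h3) h1)
    (mul_ne_zero (mul_ne_zero h5 h6) (mul_ne_zero h2 h1)), Nat.factorial_succ]
  push_cast
  ring

lemma bessel_summable_norm (z : ℂ) : Summable (fun k => ‖bA ν k * z ^ (2 * k)‖) := by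
  apply summable_of_ratio_norm_eventually_le (r := 1/2) (by norm_num)
  rw [eventually_atTop]
  refine ⟨⌈‖ν‖ + 2 * ‖z‖ ^ 2⌉₊, fun k hk => ?_⟩
  have hkR : ‖ν‖ + 2 * ‖z‖ ^ 2 ≤ (k : ℝ) := (Nat.ceil_le.mp hk).trans' le_rfl
  have h2 := nuk_ne hν k
  have hX : (4 * ((k:ℂ)+1) * (ν + k + 1)) ≠ 0 := by
    exact mul_ne_zero (mul_ne_zero (by norm_num) (Nat.cast_add_one_ne_zero k)) h2
  have he : bA ν (k+1) * z ^ (2*(k+1)) =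
      (bA ν k * z ^ (2*k)) * (z ^ 2 * (-(4 * ((k:ℂ)+1) * (ν + k + 1)))⁻¹) := by
    rw [bA_rec hν k]
    field_simp
    ring
  have hnorm : ‖ν + (k:ℂ) + 1‖ ≥ (k:ℝ) + 1 - ‖ν‖ := by
    have htri := norm_add_le (ν + (k:ℂ) + 1) (-ν)
    rw [show (ν + (k:ℂ) + 1) + (-ν) = ((k:ℂ)+1) by ring, norm_neg] at htri
    have hc : ‖((k:ℂ)+1)‖ = (k:ℝ)+1 := by
      rw [show ((k:ℂ)+1) = ((k+1 : ℕ) : ℂ) by push_cast; ring, Complex.norm_natCast]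
      push_cast; ring
    rw [hc] at htri
    linarith
  have hXnorm : ‖(4 * ((k:ℂ)+1) * (ν + k + 1))‖ = 4 * ((k:ℝ)+1) * ‖ν + (k:ℂ) + 1‖ := by
    rw [norm_mul, norm_mul]
    congr 1
    · congr 1
      · norm_num
      · rw [show ((k:ℂ)+1) = ((k+1 : ℕ) : ℂ) by push_cast; ring, Complex.norm_natCast]
        push_cast; ring
  rw [he, norm_mul, Real.norm_of_nonneg (mul_nonneg (norm_nonneg _) (norm_nonneg _)), norm_norm]
  rw [mul_comm (1/2 : ℝ)]
  apply mul_le_mul_of_nonneg_left _ (norm_nonneg _)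
  rw [norm_mul, norm_inv, norm_neg, hXnorm, norm_pow]
  have hpos : (0:ℝ) < 4 * ((k:ℝ)+1) * ‖ν + (k:ℂ) + 1‖ :=
    mul_pos (by positivity) (norm_pos_iff.mpr h2)
  rw [mul_inv_le_iff₀ hpos]
  have hz2 : (0:ℝ) ≤ ‖z‖^2 := by positivity
  have hnu : (0:ℝ) ≤ ‖ν‖ := norm_nonneg _
  nlinarith [hnorm, hkR]

lemma bessel_hasSum (z : ℂ) : HasSum (fun k => bA ν k * z ^ (2 * k)) (besselSeries ν z) := by
  have hsum : Summable (fun k => bA ν k * z ^ (2 * k)) := (bessel_summable_norm hν z).of_norm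
  have h : (fun k => bA ν k * z ^ (2*k)) = fun k =>
      (-1) ^ k * z ^ (2 * k) / (4 ^ k * (Nat.factorial k : ℂ) * Complex.Gamma (ν + (k : ℂ) + 1)) := by
    funext k
    rw [bA]
    ring
  rw [h] at hsum ⊢
  exact hsum.hasSum


end basic

open Finset

noncomputable def bB (ν : ℂ) (n : ℕ) : ℂ := if n % 2 = 0 then bA ν (n / 2) else 0

lemma bB_odd_mul {ν : ℂ} {m : ℕ} (hm : ∀ k : ℕ, ¬ 2 * k = m) (z : ℂ) : bB ν m * z ^ m = 0 := by
  have h1 : m % 2 = 1 := by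
    rcases Nat.even_or_odd m with ⟨r, hr⟩ | ho
    · exact absurd (by omega : 2 * r = m) (hm r)
    · obtain ⟨r, hr⟩ := ho
      omega
  simp [bB, h1]

lemma bB_comp (ν z : ℂ) :
    ((fun n => bB ν n * z ^ n) ∘ (fun k : ℕ => 2 * k)) = fun k => bA ν k * z ^ (2 * k) := by
  funext k
  simp [bB, Nat.mul_div_cancel_left, Nat.mul_mod_right]

lemma bB_hasSum {ν : ℂ} (hν : ∀ n : ℕ, 2 * ν + (n : ℂ) + 1 ≠ 0) (z : ℂ) :
    HasSum (fun n => bB ν n * z ^ n) (besselSeries ν z) := by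
  have hinj : Function.Injective (fun k : ℕ => 2 * k) := fun a b h => by dsimp at h; omega
  refine (Function.Injective.hasSum_iff hinj ?_).mp ?_
  · intro m hm
    exact bB_odd_mul (by simpa [Set.range] using hm) z
  · rw [bB_comp]
    exact bessel_hasSum hν z

lemma bB_summable_norm {ν : ℂ} (hν : ∀ n : ℕ, 2 * ν + (n : ℂ) + 1 ≠ 0) (z : ℂ) :
    Summable (fun n => ‖bB ν n * z ^ n‖) := by
  have hinj : Function.Injective (fun k : ℕ => 2 * k) := fun a b h => by dsimp at h; omega
  refine (Function.Injective.summable_iff hinj ?_).mp ?_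
  · intro m hm
    rw [bB_odd_mul (by simpa [Set.range] using hm) z, norm_zero]
  · have : ((fun n => ‖bB ν n * z ^ n‖) ∘ (fun k : ℕ => 2 * k)) =
        fun k => ‖bA ν k * z ^ (2 * k)‖ := by
      funext k
      simp only [Function.comp_apply]
      rw [show bB ν (2 * k) * z ^ (2 * k) = bA ν k * z ^ (2 * k) from congrFun (bB_comp ν z) k]
    rw [this]
    exact bessel_summable_norm hν z

-- exponential series
lemma exp_hasSum (c z : ℂ) :
    HasSum (fun n => (c ^ n / (Nat.factorial n : ℂ)) * z ^ n) (Complex.exp (c * z)) := by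
  have h := NormedSpace.expSeries_div_hasSum_exp (c * z)
  rw [← Complex.exp_eq_exp_ℂ] at h
  have heq : (fun n => (c ^ n / (Nat.factorial n : ℂ)) * z ^ n) =
      fun n => (c * z) ^ n / (Nat.factorial n : ℂ) := by
    funext n
    rw [mul_pow]
    ring
  rw [heq]
  exact h

lemma exp_summable_norm (c z : ℂ) :
    Summable (fun n => ‖(c ^ n / (Nat.factorial n : ℂ)) * z ^ n‖) := by
  have h := Real.summable_pow_div_factorial ‖c * z‖
  refine h.congr fun n => ?_
  simp only [norm_mul, norm_div, norm_pow, Complex.norm_natCast]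
  ring

-- Cauchy coefficients
noncomputable def cd (ν c : ℂ) (n : ℕ) : ℂ :=
  ∑ k ∈ range (n + 1), (c ^ k / (Nat.factorial k : ℂ)) * bB ν (n - k)

lemma cd_hasSum {ν : ℂ} (hν : ∀ n : ℕ, 2 * ν + (n : ℂ) + 1 ≠ 0) (c z : ℂ) :
    HasSum (fun n => cd ν c n * z ^ n) (Complex.exp (c * z) * besselSeries ν z) := by
  have h := hasSum_sum_range_mul_of_summable_norm (f := fun n => (c ^ n / (Nat.factorial n : ℂ)) * z ^ n)
    (g := fun n => bB ν n * z ^ n) (exp_summable_norm c z) (bB_summable_norm hν z)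
  rw [(exp_hasSum c z).tsum_eq, (bB_hasSum hν z).tsum_eq] at h
  convert h using 1
  · rfl
  funext n
  rw [cd, sum_mul]
  refine (Finset.sum_congr rfl fun k hk => ?_).symm
  rw [mem_range] at hk
  have : z ^ k * z ^ (n - k) = z ^ n := by
    rw [← pow_add]
    congr 1
    omega
  calc (c ^ k / (Nat.factorial k : ℂ)) * z ^ k * (bB ν (n - k) * z ^ (n - k))
      = (c ^ k / (Nat.factorial k : ℂ)) * bB ν (n - k) * (z ^ k * z ^ (n - k)) := by ring
    _ = (c ^ k / (Nat.factorial k : ℂ)) * bB ν (n - k) * z ^ n := by rw [this]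
    

noncomputable def TT (ν c : ℂ) (n k : ℕ) : ℂ :=
  if 2 * k ≤ n then (c ^ (n - 2 * k) / (Nat.factorial (n - 2 * k) : ℂ)) * bA ν k else 0

noncomputable def SS (ν c : ℂ) (n : ℕ) : ℂ := ∑ k ∈ range (n + 1), TT ν c n k

lemma cd_eq_SS (ν c : ℂ) (n : ℕ) : cd ν c n = SS ν c n := by
  rw [cd, SS]
  have hL : ∑ j ∈ range (n + 1), (c ^ j / (Nat.factorial j : ℂ)) * bB ν (n - j)
      = ∑ j ∈ (range (n + 1)).filter (fun j => (n - j) % 2 = 0),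
          (c ^ j / (Nat.factorial j : ℂ)) * bA ν ((n - j) / 2) := by
    rw [Finset.sum_filter]
    refine Finset.sum_congr rfl fun j _ => ?_
    rw [bB]
    split_ifs with h
    · rfl
    · rw [mul_zero]
  have hR : ∑ k ∈ range (n + 1), TT ν c n k
      = ∑ k ∈ (range (n + 1)).filter (fun k => 2 * k ≤ n),
          (c ^ (n - 2 * k) / (Nat.factorial (n - 2 * k) : ℂ)) * bA ν k := by
    rw [Finset.sum_filter]
    refine Finset.sum_congr rfl fun k _ => ?_
    rw [TT]
  rw [hL, hR]
  refine Finset.sum_nbij' (fun j => (n - j) / 2) (fun k => n - 2 * k) ?_ ?_ ?_ ?_ ?_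
  · intro j hj
    simp only [mem_filter, mem_range] at hj ⊢
    omega
  · intro k hk
    simp only [mem_filter, mem_range] at hk ⊢
    omega
  · intro j hj
    simp only [mem_filter, mem_range] at hj
    omega
  · intro k hk
    simp only [mem_filter, mem_range] at hk
    omega
  · intro j hj
    simp only [mem_filter, mem_range] at hj
    have h1 : n - 2 * ((n - j) / 2) = j := by omega
    rw [h1]

lemma TT_big {ν c : ℂ} {n k : ℕ} (h : n < 2 * k) : TT ν c n k = 0 := by
  rw [TT, if_neg (by omega)]

lemma SS_eq_range (ν c : ℂ) {m R : ℕ} (hR : m + 1 ≤ R) :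
    SS ν c m = ∑ k ∈ range R, TT ν c m k := by
  rw [SS]
  refine Finset.sum_subset (Finset.range_subset_range.mpr hR) fun k hk hk' => ?_
  simp only [mem_range] at hk hk'
  exact TT_big (by omega)

lemma TT_shift {ν : ℂ} (hν : ∀ n : ℕ, 2 * ν + (n : ℂ) + 1 ≠ 0) (c : ℂ) (m i : ℕ) :
    TT ν c m i = -(4 * ((i : ℂ) + 1) * (ν + (i : ℂ) + 1)) * TT ν c (m + 2) (i + 1) := by
  rw [TT, TT]
  split_ifs with h1 h2 h2
  · have he : m + 2 - 2 * (i + 1) = m - 2 * i := by omega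
    rw [he, bA_rec hν i]
    ring
  · omega
  · omega
  · rw [mul_zero]

lemma TT_star {ν : ℂ} (hν : ∀ n : ℕ, 2 * ν + (n : ℂ) + 1 ≠ 0) (c : ℂ) (m k : ℕ) :
    ((m : ℂ) + 2) * (2 * ν + (m : ℂ) + 2) * TT ν c (m + 2) k
      = c * (2 * ν + 2 * (m : ℂ) + 3) * TT ν c (m + 1) k - c ^ 2 * TT ν c m k
        + 4 * (k : ℂ) * (ν + (k : ℂ)) * TT ν c (m + 2) k := by
  rw [TT, TT, TT]
  split_ifs with h1 h2 h3
  · -- 2k ≤ m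
    obtain ⟨a, rfl⟩ : ∃ a, m = 2 * k + a := ⟨m - 2 * k, by omega⟩
    have e2 : 2 * k + a + 2 - 2 * k = a + 2 := by omega
    have e1 : 2 * k + a + 1 - 2 * k = a + 1 := by omega
    have e0 : 2 * k + a - 2 * k = a := by omega
    rw [e0, e1, e2]
    have hfa : ((a.factorial : ℂ)) ≠ 0 := by exact_mod_cast a.factorial_ne_zero
    have ha1 : ((a : ℂ) + 1) ≠ 0 := Nat.cast_add_one_ne_zero a
    have ha2 : ((a : ℂ) + 2) ≠ 0 := by
      exact_mod_cast (by omega : a + 2 ≠ 0)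
    have hf1 : (((a+1).factorial : ℂ)) = ((a:ℂ)+1) * (a.factorial : ℂ) := by
      rw [Nat.factorial_succ]; push_cast; ring
    have hf2 : (((a+2).factorial : ℂ)) = ((a:ℂ)+2) * (((a+1).factorial : ℂ)) := by
      rw [Nat.factorial_succ (a+1)]; push_cast; ring
    have hff1 : (((a+1).factorial : ℂ)) ≠ 0 := by rw [hf1]; exact mul_ne_zero ha1 hfa
    have hff2 : (((a+2).factorial : ℂ)) ≠ 0 := by rw [hf2]; exact mul_ne_zero ha2 hff1
    have h21 : ((a:ℂ)+2) * (c^(a+2) / (((a+2).factorial : ℂ)))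
        = c * (c^(a+1) / (((a+1).factorial : ℂ))) := by
      rw [hf2, pow_succ]
      field_simp
    have h10 : ((a:ℂ)+1) * (c^(a+1) / (((a+1).factorial : ℂ)))
        = c * (c^a / ((a.factorial : ℂ))) := by
      rw [hf1, pow_succ]
      field_simp
    push_cast
    linear_combination (bA ν k * (2*ν + 2*(2*(k:ℂ)+(a:ℂ)) + 3 - ((a:ℂ)+1))) * h21
      - (bA ν k * c) * h10
  · -- 2k = m + 1
    obtain ⟨t, rfl, rfl⟩ : ∃ t, k = t + 1 ∧ m = 2 * t + 1 := ⟨k - 1, by omega, by omega⟩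
    have e2 : 2 * t + 1 + 2 - 2 * (t + 1) = 1 := by omega
    have e1 : 2 * t + 1 + 1 - 2 * (t + 1) = 0 := by omega
    rw [e1, e2]
    simp only [Nat.factorial_one, Nat.factorial_zero, pow_one, pow_zero, Nat.cast_one]
    push_cast
    ring
  · omega
  · -- 2k = m + 2
    obtain ⟨t, rfl, rfl⟩ : ∃ t, k = t + 1 ∧ m = 2 * t := ⟨k - 1, by omega, by omega⟩
    have e2 : 2 * t + 2 - 2 * (t + 1) = 0 := by omega
    rw [e2]
    simp only [Nat.factorial_zero, pow_zero, Nat.cast_one]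
    push_cast
    ring
  · omega
  · omega
  · omega
  · ring

lemma SS_rec {ν : ℂ} (hν : ∀ n : ℕ, 2 * ν + (n : ℂ) + 1 ≠ 0) (c : ℂ) (m : ℕ) :
    ((m : ℂ) + 2) * (2 * ν + (m : ℂ) + 2) * SS ν c (m + 2)
      = c * (2 * ν + 2 * (m : ℂ) + 3) * SS ν c (m + 1) - (c ^ 2 + 1) * SS ν c m := by
  have hS1 : SS ν c (m + 1) = ∑ k ∈ range (m + 3), TT ν c (m + 1) k :=
    SS_eq_range ν c (by omega)
  have hS0 : SS ν c m = ∑ k ∈ range (m + 3), TT ν c m k :=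
    SS_eq_range ν c (by omega)
  have hshift : ∑ k ∈ range (m + 3), 4 * (k : ℂ) * (ν + (k : ℂ)) * TT ν c (m + 2) k
      = - SS ν c m := by
    rw [Finset.sum_range_succ']
    simp only [Nat.cast_zero, mul_zero, zero_mul, add_zero]
    have : SS ν c m = ∑ i ∈ range (m + 2), TT ν c m i := SS_eq_range ν c (by omega)
    rw [this, ← Finset.sum_neg_distrib]
    refine Finset.sum_congr rfl fun i _ => ?_
    rw [TT_shift hν c m i]
    push_cast
    ring
  have hS2 : SS ν c (m + 2) = ∑ k ∈ range (m + 3), TT ν c (m + 2) k := rfl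
  calc ((m : ℂ) + 2) * (2 * ν + (m : ℂ) + 2) * SS ν c (m + 2)
      = ∑ k ∈ range (m + 3), ((m : ℂ) + 2) * (2 * ν + (m : ℂ) + 2) * TT ν c (m + 2) k := by
        rw [hS2, Finset.mul_sum]
    _ = ∑ k ∈ range (m + 3), (c * (2 * ν + 2 * (m : ℂ) + 3) * TT ν c (m + 1) k
          - c ^ 2 * TT ν c m k + 4 * (k : ℂ) * (ν + (k : ℂ)) * TT ν c (m + 2) k) :=
        Finset.sum_congr rfl fun k _ => TT_star hν c m k
    _ = c * (2 * ν + 2 * (m : ℂ) + 3) * (∑ k ∈ range (m + 3), TT ν c (m + 1) k)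
          - c ^ 2 * (∑ k ∈ range (m + 3), TT ν c m k)
          + ∑ k ∈ range (m + 3), 4 * (k : ℂ) * (ν + (k : ℂ)) * TT ν c (m + 2) k := by
        rw [Finset.sum_add_distrib, Finset.sum_sub_distrib, Finset.mul_sum, Finset.mul_sum]
    _ = c * (2 * ν + 2 * (m : ℂ) + 3) * SS ν c (m + 1) - (c ^ 2 + 1) * SS ν c m := by
        rw [← hS1, ← hS0, hshift]
        ring

/-- The normalized `n`-th Maclaurin coefficient of `h(z) * J_ν(z)`:
`Γ(ν+1)` times the `n`-th Maclaurin coefficient of `z ↦ h z * besselSeries ν z`. -/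
noncomputable def normCoeff (ν : ℂ) (h : ℂ → ℂ) (n : ℕ) : ℂ :=
  Complex.Gamma (ν + 1) *
    (iteratedDeriv n (fun z => h z * besselSeries ν z) 0 / (Nat.factorial n : ℂ))

section final
variable {ν : ℂ} (hν : ∀ n : ℕ, 2 * ν + (n : ℂ) + 1 ≠ 0)
include hν

lemma normCoeff_eq (h : ℂ → ℂ) (d : ℕ → ℂ)
    (hsum : ∀ z, HasSum (fun n => d n * z ^ n) (h z * besselSeries ν z)) (n : ℕ) :
    normCoeff ν h n = Complex.Gamma (ν + 1) * d n := by
  simp only [normCoeff]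
  rw [iteratedDeriv_eq_of_hasSum d _ hsum n]
  congr 1
  rw [mul_comm, mul_div_assoc, div_self (by exact_mod_cast n.factorial_ne_zero), mul_one]

lemma normCoeff_exp (c : ℂ) (n : ℕ) :
    normCoeff ν (fun z => Complex.exp (c * z)) n = Complex.Gamma (ν + 1) * SS ν c n := by
  rw [normCoeff_eq hν _ (cd ν c) (fun z => cd_hasSum hν c z) n, cd_eq_SS]

lemma sin_hasSum (p : ℂ) (z : ℂ) :
    HasSum (fun n => ((cd ν (Complex.I * p) n - cd ν (-(Complex.I * p)) n) / (2 * Complex.I)) * z ^ n)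
      (Complex.sin (p * z) * besselSeries ν z) := by
  have h1 := cd_hasSum hν (Complex.I * p) z
  have h2 := cd_hasSum hν (-(Complex.I * p)) z
  have h3 := (h1.sub h2).div_const (2 * Complex.I)
  have heq : (fun n => (cd ν (Complex.I * p) n * z ^ n - cd ν (-(Complex.I * p)) n * z ^ n) / (2 * Complex.I))
      = fun n => ((cd ν (Complex.I * p) n - cd ν (-(Complex.I * p)) n) / (2 * Complex.I)) * z ^ n :=
    funext fun n => by ring
  rw [heq] at h3
  convert h3 using 1
  · rfl
  rw [Complex.sin]
  rw [show -(p * z) * Complex.I = -(Complex.I * p * z) by ring,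
      show p * z * Complex.I = Complex.I * p * z by ring,
      show -(Complex.I * p) * z = -(Complex.I * p * z) by ring]
  have hI : (2 : ℂ) * Complex.I ≠ 0 := by
    simp [Complex.I_ne_zero]
  field_simp
  linear_combination (besselSeries ν z *
    (Complex.exp (-(Complex.I * p * z)) - Complex.exp (Complex.I * p * z))) * Complex.I_sq

lemma normCoeff_sin (p : ℂ) (n : ℕ) :
    normCoeff ν (fun z => Complex.sin (p * z)) n
      = Complex.Gamma (ν + 1) *
          ((cd ν (Complex.I * p) n - cd ν (-(Complex.I * p)) n) / (2 * Complex.I)) :=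
  normCoeff_eq hν _ _ (sin_hasSum hν p) n

lemma Gamma_nu1_ne : Complex.Gamma (ν + 1) ≠ 0 := by
  apply Complex.Gamma_ne_zero
  intro m h
  apply hν (2 * m + 1)
  push_cast
  linear_combination 2 * h

lemma Gamma_bA0 : Complex.Gamma (ν + 1) * bA ν 0 = 1 := by
  rw [bA]
  simp only [pow_zero, Nat.factorial_zero, Nat.cast_one, Nat.cast_zero, one_mul, mul_one, add_zero]
  rw [one_div, mul_inv_cancel₀ (Gamma_nu1_ne hν)]

lemma SS_zero (c : ℂ) : SS ν c 0 = bA ν 0 := by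
  simp [SS, TT]

lemma SS_one (c : ℂ) : SS ν c 1 = c * bA ν 0 := by
  rw [SS]
  rw [Finset.sum_range_succ, Finset.sum_range_one]
  rw [TT, TT, if_pos (by omega), if_neg (by omega)]
  norm_num

end final

section mainsec
variable {ν : ℂ} (hν : ∀ n : ℕ, 2 * ν + (n : ℂ) + 1 ≠ 0)
include hν

lemma U_rec {p c : ℂ} (hc2 : c ^ 2 = -p ^ 2) (m : ℕ) :
    Complex.Gamma (ν + 1) * SS ν c (m + 2)
      = (c * (2 * ν + 2 * ((m : ℂ) + 1) + 1) / ((((m : ℂ) + 1) + 1) * (2 * ν + ((m : ℂ) + 1) + 1)))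
          * (Complex.Gamma (ν + 1) * SS ν c (m + 1))
        + ((p ^ 2 - 1) / ((((m : ℂ) + 1) + 1) * (2 * ν + ((m : ℂ) + 1) + 1)))
          * (Complex.Gamma (ν + 1) * SS ν c m) := by
  have E := SS_rec hν c m
  have hD1 : ((m : ℂ) + 1 + 1) ≠ 0 := by
    exact_mod_cast (by omega : m + 2 ≠ 0)
  have hD2 : (2 * ν + ((m : ℂ) + 1) + 1) ≠ 0 := by
    have := hν (m + 1)
    push_cast at this
    intro hc
    exact this (by linear_combination hc)
  have hD : (((m : ℂ) + 2) * (2 * ν + (m : ℂ) + 2)) ≠ 0 := by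
    refine mul_ne_zero (by exact_mod_cast (by omega : m + 2 ≠ 0)) ?_
    intro hc
    exact hD2 (by linear_combination hc)
  have key : SS ν c (m + 2)
      = (c * (2 * ν + 2 * (m : ℂ) + 3) * SS ν c (m + 1) - (c ^ 2 + 1) * SS ν c m)
          / (((m : ℂ) + 2) * (2 * ν + (m : ℂ) + 2)) := by
    rw [eq_div_iff hD]
    linear_combination E
  rw [key, div_mul_eq_mul_div, div_mul_eq_mul_div, ← add_div, mul_div_assoc',
    div_eq_div_iff hD (mul_ne_zero hD1 hD2)]
  linear_combination (-(Complex.Gamma (ν + 1) * SS ν c m) *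
    ((((m : ℂ) + 2) * (2 * ν + (m : ℂ) + 2)))) * hc2

end mainsec

theorem sin_besselJ_coeff_recurrence (ν p : ℂ) (hν : ∀ n : ℕ, 2 * ν + (n : ℂ) + 1 ≠ 0)
    (u : ℕ → ℂ) (hu : ∀ n, u n = normCoeff ν (fun z => Complex.exp (Complex.I * p * z)) n)
    (v : ℕ → ℂ) (hv : ∀ n, v n = normCoeff ν (fun z => Complex.exp (-(Complex.I * p) * z)) n)
    (w : ℕ → ℂ) (hw : ∀ n, w n = normCoeff ν (fun z => Complex.sin (p * z)) n) :
    (∀ n : ℕ, w n = (u n - v n) / (2 * Complex.I)) ∧ u 0 = 1 ∧ u 1 = Complex.I * p ∧ v 0 = 1 ∧ v 1 = -(Complex.I * p) ∧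
    (∀ n : ℕ, 1 ≤ n →
      u (n + 1) = (Complex.I * p * (2 * ν + 2 * ((n : ℂ)) + 1) / ((((n : ℂ)) + 1) * (2 * ν + ((n : ℂ)) + 1))) * u n + ((p ^ 2 - 1) / ((((n : ℂ)) + 1) * (2 * ν + ((n : ℂ)) + 1))) * u (n - 1) ∧
      v (n + 1) = (-(Complex.I * p * (2 * ν + 2 * ((n : ℂ)) + 1)) / ((((n : ℂ)) + 1) * (2 * ν + ((n : ℂ)) + 1))) * v n + ((p ^ 2 - 1) / ((((n : ℂ)) + 1) * (2 * ν + ((n : ℂ)) + 1))) * v (n - 1)) := by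
  have hGA := Gamma_bA0 hν
  have huS : ∀ n, u n = Complex.Gamma (ν + 1) * SS ν (Complex.I * p) n := fun n => by
    rw [hu n, normCoeff_exp hν (Complex.I * p) n]
  have hvS : ∀ n, v n = Complex.Gamma (ν + 1) * SS ν (-(Complex.I * p)) n := fun n => by
    rw [hv n, normCoeff_exp hν (-(Complex.I * p)) n]
  refine ⟨?_, ?_, ?_, ?_, ?_, ?_⟩
  · intro n
    rw [hw n, normCoeff_sin hν p n,
      hu n, normCoeff_eq hν _ (cd ν (Complex.I * p)) (fun z => cd_hasSum hν _ z) n,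
      hv n, normCoeff_eq hν _ (cd ν (-(Complex.I * p))) (fun z => cd_hasSum hν _ z) n]
    ring
  · rw [huS 0, SS_zero hν (Complex.I * p), hGA]
  · rw [huS 1, SS_one hν (Complex.I * p)]
    linear_combination (Complex.I * p) * hGA
  · rw [hvS 0, SS_zero hν (-(Complex.I * p)), hGA]
  · rw [hvS 1, SS_one hν (-(Complex.I * p))]
    linear_combination (-(Complex.I * p)) * hGA
  · intro n hn
    obtain ⟨m, rfl⟩ : ∃ m, n = m + 1 := ⟨n - 1, by omega⟩
    simp only [Nat.add_sub_cancel]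
    constructor
    · rw [huS (m + 1 + 1), huS (m + 1), huS m,
        show m + 1 + 1 = m + 2 from rfl]
      push_cast
      exact U_rec hν (by rw [mul_pow, Complex.I_sq]; ring) m
    · rw [hvS (m + 1 + 1), hvS (m + 1), hvS m,
        show m + 1 + 1 = m + 2 from rfl]
      push_cast
      have := U_rec hν (c := -(Complex.I * p)) (p := p) (by rw [neg_pow, mul_pow, Complex.I_sq]; ring) m
      rw [this]
      ring
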